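/- Let G be a countable group with a length function |·| satisfying |gh| ≤ |g|+|h|, and suppose the growth v = limsup (1/t) log card{g: |g| ≤ t} is finite. Let μ_0, μ_1, ... be probability measures with uniformly integrable first moments such that the rate of escape l = lim (1/n)∑_g (μ_0*⋯*μ_{n-1})(g)|g| and the asymptotic entropy h̄ = lim H(μ_0*⋯*μ_{n-1})/n both exist. Then h̄ ≤ l·v. -/
import Mathlib


open scoped ENNReal
open Filter Topology MeasureTheory

/-- Convolution of probability measures on a group. -/
noncomputable def pmfConv {G : Type*} [Group G] (μ ν : PMF G) : PMF G :=
  μ.bind fun h => ν.map fun k => h * k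

/-- Shannon entropy, valued in `[0,∞]`. -/
noncomputable def pmfEntropy {G : Type*} (θ : PMF G) : ℝ≥0∞ :=
  ∑' g, ENNReal.ofReal (Real.negMulLog (θ g).toReal)

/-- `convPrefix μ n = μ 0 * μ 1 * ⋯ * μ (n-1)` (n factors). -/
noncomputable def convPrefix {G : Type*} [Group G] (μ : ℕ → PMF G) : ℕ → PMF G
  | 0 => PMF.pure 1
  | n + 1 => pmfConv (convPrefix μ n) (μ n)

/-- First moment `|θ| = ∑_g θ(g) ℓ(g)` of a measure with respect to a length
function `ℓ`, valued in `[0,∞]`. -/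
noncomputable def pmfMoment {G : Type*} (ℓ : G → ℝ) (θ : PMF G) : ℝ≥0∞ :=
  ∑' g, θ g * ENNReal.ofReal (ℓ g)

/-- Pointwise Gibbs-type inequality: `-p log p + p ≤ p c + e^{-c}` for `p ∈ [0,1]`. -/
lemma negMulLog_add_le_key {p c : ℝ} (hp0 : 0 ≤ p) (_hp1 : p ≤ 1) :
    Real.negMulLog p + p ≤ p * c + Real.exp (-c) := by
  rcases eq_or_lt_of_le hp0 with h | h
  · simp only [← h, Real.negMulLog, neg_zero, zero_mul, add_zero, zero_add]
    positivity
  · set q := Real.exp (-c) with hqdef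
    have hq : 0 < q := Real.exp_pos _
    have hlog : Real.log (q / p) ≤ q / p - 1 :=
      Real.log_le_sub_one_of_pos (by positivity)
    have h1 : p * Real.log (q / p) ≤ q - p := by
      have h2 := mul_le_mul_of_nonneg_left hlog hp0
      have h3 : p * (q / p - 1) = q - p := by field_simp
      linarith [h2, h3.le]
    have hlq : Real.log q = -c := Real.log_exp _
    have hld : Real.log (q / p) = -c - Real.log p := by
      rw [Real.log_div (ne_of_gt hq) (ne_of_gt h), hlq]
    rw [hld] at h1
    simp only [Real.negMulLog]
    nlinarith [h1]

/-- The fundamental entropy bound: `H(θ) + 1 ≤ λ·|θ| + Z(λ)` where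
`Z(λ) = ∑ e^{-λ ℓ(g)}`. -/
lemma pmfEntropy_add_one_le {G : Type*} [Countable G] (ℓ : G → ℝ) (hnn : ∀ g, 0 ≤ ℓ g)
    (θ : PMF G) (lam : ℝ) (hlam : 0 ≤ lam) :
    pmfEntropy θ + 1 ≤ ENNReal.ofReal lam * pmfMoment ℓ θ +
      ∑' g, ENNReal.ofReal (Real.exp (-(lam * ℓ g))) := by
  have key : ∀ g : G, ENNReal.ofReal (Real.negMulLog (θ g).toReal) + θ g ≤
      θ g * ENNReal.ofReal (lam * ℓ g) + ENNReal.ofReal (Real.exp (-(lam * ℓ g))) := by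
    intro g
    have hθt : θ g ≠ ⊤ := θ.apply_ne_top g
    set p := (θ g).toReal with hp
    have hp0 : 0 ≤ p := ENNReal.toReal_nonneg
    have hp1 : p ≤ 1 := by
      have := ENNReal.toReal_mono ENNReal.one_ne_top (θ.coe_le_one g)
      simpa using this
    have hgθ : θ g = ENNReal.ofReal p := (ENNReal.ofReal_toReal hθt).symm
    have hc0 : 0 ≤ lam * ℓ g := mul_nonneg hlam (hnn g)
    rw [hgθ, ← ENNReal.ofReal_add (Real.negMulLog_nonneg hp0 hp1) hp0,
      ← ENNReal.ofReal_mul hp0,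
      ← ENNReal.ofReal_add (mul_nonneg hp0 hc0) (Real.exp_nonneg _)]
    exact ENNReal.ofReal_le_ofReal (negMulLog_add_le_key hp0 hp1)
  calc pmfEntropy θ + 1
      = ∑' g, (ENNReal.ofReal (Real.negMulLog (θ g).toReal) + θ g) := by
        rw [ENNReal.tsum_add, θ.tsum_coe]; rfl
    _ ≤ ∑' g, (θ g * ENNReal.ofReal (lam * ℓ g) +
          ENNReal.ofReal (Real.exp (-(lam * ℓ g)))) := ENNReal.tsum_le_tsum key
    _ = ENNReal.ofReal lam * pmfMoment ℓ θ +
          ∑' g, ENNReal.ofReal (Real.exp (-(lam * ℓ g))) := by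
        rw [ENNReal.tsum_add]
        congr 1
        have : ∀ g : G, θ g * ENNReal.ofReal (lam * ℓ g) =
            ENNReal.ofReal lam * (θ g * ENNReal.ofReal (ℓ g)) := by
          intro g
          rw [ENNReal.ofReal_mul hlam]; ring
        simp_rw [this]
        rw [ENNReal.tsum_mul_left, pmfMoment]

/-- Finiteness of the partition function `Z(λ) = ∑ e^{-λ ℓ(g)}` for `λ` above the
growth rate. -/
lemma partition_ne_top {G : Type*} [Countable G] (ℓ : G → ℝ) (hnn : ∀ g, 0 ≤ ℓ g)
    (hfin : ∀ t : ℝ, {g : G | ℓ g ≤ t}.Finite) (v ε : ℝ) (hε : 0 < ε)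
    (hlam0 : 0 ≤ v + 2 * ε)
    (hv : ∀ᶠ t : ℝ in atTop, (Nat.card {g : G | ℓ g ≤ t} : ℝ) ≤ Real.exp ((v + ε) * t)) :
    (∑' g : G, ENNReal.ofReal (Real.exp (-((v + 2 * ε) * ℓ g)))) ≠ ⊤ := by
  set lam : ℝ := v + 2 * ε with hlamdef
  set f : G → ℝ≥0∞ := fun g => ENNReal.ofReal (Real.exp (-(lam * ℓ g))) with hfdef
  set c : ℕ → ℝ := fun k =>
    (Nat.card {g : G | ℓ g ≤ (k : ℝ)} : ℝ) * Real.exp (-(lam * ((k : ℝ) - 1))) with hcdef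
  have hc0 : ∀ k, 0 ≤ c k := fun k => by positivity
  -- rewrite the sum fiberwise over `k = ⌈ℓ g⌉₊`
  have hfib := ENNReal.tsum_fiberwise f (fun g => ⌈ℓ g⌉₊)
  rw [← hfib]
  -- bound each fiber sum by `c k`
  have hsub : ∀ k : ℕ, ((fun g => ⌈ℓ g⌉₊) ⁻¹' {k}) ⊆ {g : G | ℓ g ≤ (k : ℝ)} := by
    intro k g hg
    have hk : ⌈ℓ g⌉₊ = k := hg
    have := Nat.le_ceil (ℓ g)
    simpa [hk] using this
  have hbound : ∀ k : ℕ, (∑' x : ((fun g => ⌈ℓ g⌉₊) ⁻¹' {k}), f x) ≤ ENNReal.ofReal (c k) := by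
    intro k
    have hfinfib : ((fun g : G => ⌈ℓ g⌉₊) ⁻¹' {k}).Finite :=
      (hfin (k : ℝ)).subset (hsub k)
    haveI := hfinfib.to_subtype
    haveI : Fintype ((fun g : G => ⌈ℓ g⌉₊) ⁻¹' {k}) := Fintype.ofFinite _
    rw [tsum_fintype (fun x : ((fun g : G => ⌈ℓ g⌉₊) ⁻¹' {k}) => f ↑x)]
    have hterm : ∀ x : ((fun g : G => ⌈ℓ g⌉₊) ⁻¹' {k}),
        f x ≤ ENNReal.ofReal (Real.exp (-(lam * ((k : ℝ) - 1)))) := by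
      intro x
      have hk : ⌈ℓ (x : G)⌉₊ = k := x.2
      have hge : (k : ℝ) - 1 ≤ ℓ (x : G) := by
        rcases Nat.eq_zero_or_pos k with h0 | h1
        · subst h0; simpa using (sub_nonpos.mpr (by norm_num : (0:ℝ) ≤ 1)).trans (hnn _)
        · obtain ⟨k', rfl⟩ := Nat.exists_eq_succ_of_ne_zero h1.ne'
          have : (k' : ℝ) < ℓ (x : G) := by
            have : k' < ⌈ℓ (x : G)⌉₊ := by omega
            exact_mod_cast Nat.lt_ceil.mp this
          push_cast
          linarith
      exact ENNReal.ofReal_le_ofReal (Real.exp_le_exp.mpr (by nlinarith [hlam0]))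
    calc (∑ x : ((fun g : G => ⌈ℓ g⌉₊) ⁻¹' {k}), f x)
        ≤ Finset.univ.card • ENNReal.ofReal (Real.exp (-(lam * ((k : ℝ) - 1)))) :=
          Finset.sum_le_card_nsmul _ _ _ (fun x _ => hterm x)
      _ ≤ ENNReal.ofReal (c k) := by
          rw [nsmul_eq_mul]
          have hcard : (Finset.univ (α := ((fun g : G => ⌈ℓ g⌉₊) ⁻¹' {k}))).card ≤
              Nat.card {g : G | ℓ g ≤ (k : ℝ)} := by
            rw [Finset.card_univ, ← Nat.card_eq_fintype_card, Nat.card_coe_set_eq, Nat.card_coe_set_eq]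
            exact Set.ncard_le_ncard (hsub k) (hfin _)
          calc ((Finset.univ (α := ((fun g : G => ⌈ℓ g⌉₊) ⁻¹' {k}))).card : ℝ≥0∞) * ENNReal.ofReal (Real.exp (-(lam * ((k : ℝ) - 1))))
              ≤ (Nat.card {g : G | ℓ g ≤ (k : ℝ)} : ℝ≥0∞) *
                ENNReal.ofReal (Real.exp (-(lam * ((k : ℝ) - 1)))) := by
                exact mul_le_mul_left (by exact_mod_cast Nat.cast_le.mpr hcard) _
            _ = ENNReal.ofReal (c k) := by
                rw [← ENNReal.ofReal_natCast, ← ENNReal.ofReal_mul (by positivity)]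
  -- summability of `c`
  obtain ⟨T, hT⟩ := eventually_atTop.mp hv
  set N : ℕ := ⌈T⌉₊ with hN
  have hsumm : Summable c := by
    rw [← summable_nat_add_iff N]
    have hsummd : Summable (fun k : ℕ => Real.exp lam * Real.exp (-ε) ^ (k + N)) :=
      ((summable_geometric_of_lt_one (Real.exp_nonneg _)
        (Real.exp_lt_one_iff.mpr (by linarith))).mul_left _).comp_injective
        (add_left_injective N)
    refine Summable.of_nonneg_of_le (fun k => hc0 _) (fun k => ?_) hsummd
    have hkT : T ≤ ((k + N : ℕ) : ℝ) := by
      refine (Nat.le_ceil T).trans ?_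
      exact_mod_cast Nat.le_add_left N k
    have hcard := hT ((k + N : ℕ) : ℝ) hkT
    calc c (k + N) ≤ Real.exp ((v + ε) * ((k + N : ℕ) : ℝ)) *
          Real.exp (-(lam * (((k + N : ℕ) : ℝ) - 1))) := by
          refine mul_le_mul_of_nonneg_right hcard (Real.exp_nonneg _)
      _ = Real.exp lam * Real.exp (-ε) ^ (k + N) := by
          rw [← Real.exp_add, ← Real.exp_nat_mul, ← Real.exp_add]
          congr 1
          push_cast
          ring
  -- conclude
  have hle : (∑' k : ℕ, ∑' x : ((fun g : G => ⌈ℓ g⌉₊) ⁻¹' {k}), f x) ≤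
      ∑' k : ℕ, ENNReal.ofReal (c k) := ENNReal.tsum_le_tsum hbound
  have : (∑' k : ℕ, ENNReal.ofReal (c k)) ≠ ⊤ := by
    rw [← ENNReal.ofReal_tsum_of_nonneg hc0 hsumm]
    exact ENNReal.ofReal_ne_top
  exact fun h => this (top_le_iff.mp (h ▸ hle))

/-- entropy–speed–growth inequality `h̄ ≤ l·v`: for a subadditive length
function with exponential growth rate at most `v`, if the rate of escape `l` and the
asymptotic entropy `h̄` of the sequence of convolutions exist, then `h̄ ≤ l·v`. -/
theorem entropy_le_speed_mul_growth {G : Type*} [Group G] [Countable G]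
    (ℓ : G → ℝ) (hnn : ∀ g, 0 ≤ ℓ g) (hone : ℓ 1 = 0)
    (hsub : ∀ g h : G, ℓ (g * h) ≤ ℓ g + ℓ h)
    (hfin : ∀ t : ℝ, {g : G | ℓ g ≤ t}.Finite)
    (v : ℝ)
    (hv : ∀ ε > (0 : ℝ), ∀ᶠ t : ℝ in atTop,
      (Nat.card {g : G | ℓ g ≤ t} : ℝ) ≤ Real.exp ((v + ε) * t))
    (μs : ℕ → PMF G) (hmom : ∀ n, pmfMoment ℓ (convPrefix μs n) ≠ ⊤)
    (l : ℝ)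
    (hl : Tendsto (fun n : ℕ => (pmfMoment ℓ (convPrefix μs n)).toReal / n)
      atTop (𝓝 l))
    (hbar : ℝ)
    (hh : Tendsto (fun n : ℕ => (pmfEntropy (convPrefix μs n)).toReal / n)
      atTop (𝓝 hbar)) :
    hbar ≤ l * v := by
  -- v ≥ 0
  have hv0 : 0 ≤ v := by
    by_contra hneg
    push_neg at hneg
    have hε : (0:ℝ) < -v / 2 := by linarith
    obtain ⟨T, hT⟩ := eventually_atTop.mp (hv (-v/2) hε)
    set t : ℝ := max T 1 with ht
    have ht1 : (1:ℝ) ≤ t := le_max_right _ _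
    have hcard := hT t (le_max_left _ _)
    have h1mem : (1 : G) ∈ {g : G | ℓ g ≤ t} := by
      simp only [Set.mem_setOf_eq, hone]; linarith
    haveI : Finite ({g : G | ℓ g ≤ t} : Set G) := (hfin t).to_subtype
    haveI : Nonempty ({g : G | ℓ g ≤ t} : Set G) := ⟨⟨1, h1mem⟩⟩
    have hpos : 1 ≤ Nat.card {g : G | ℓ g ≤ t} := Nat.card_pos
    have h1le : (1:ℝ) ≤ Real.exp ((v + -v/2) * t) := by
      calc (1:ℝ) ≤ (Nat.card {g : G | ℓ g ≤ t} : ℝ) := by exact_mod_cast hpos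
        _ ≤ _ := hcard
    have : (v + -v/2) * t < 0 := mul_neg_of_neg_of_pos (by linarith) (by linarith)
    have := Real.exp_lt_one_iff.mpr this
    linarith
  -- l ≥ 0
  have hl0 : 0 ≤ l :=
    ge_of_tendsto' hl fun n => by positivity
  -- key estimate: for every ε > 0, hbar ≤ (v + 2ε) * l
  have key : ∀ ε : ℝ, 0 < ε → hbar ≤ (v + 2 * ε) * l := by
    intro ε hε
    set lam : ℝ := v + 2 * ε with hlamdef
    have hlam0 : 0 ≤ lam := by positivity
    set Z : ℝ≥0∞ := ∑' g : G, ENNReal.ofReal (Real.exp (-(lam * ℓ g))) with hZdef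
    have hZ : Z ≠ ⊤ := partition_ne_top ℓ hnn hfin v ε hε hlam0 (hv ε hε)
    set M : ℕ → ℝ := fun n => (pmfMoment ℓ (convPrefix μs n)).toReal with hM
    set C : ℝ := Z.toReal - 1 with hC
    -- entropy bound in ℝ
    have hHn : ∀ n : ℕ, (pmfEntropy (convPrefix μs n)).toReal ≤ lam * M n + C := by
      intro n
      have hb := pmfEntropy_add_one_le ℓ hnn (convPrefix μs n) lam hlam0
      have hRfin : ENNReal.ofReal lam * pmfMoment ℓ (convPrefix μs n) + Z ≠ ⊤ :=
        ENNReal.add_ne_top.mpr ⟨ENNReal.mul_ne_top ENNReal.ofReal_ne_top (hmom n), hZ⟩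
      have hEfin : pmfEntropy (convPrefix μs n) ≠ ⊤ :=
        ne_top_of_le_ne_top hRfin (le_self_add.trans hb)
      have := ENNReal.toReal_mono hRfin hb
      rw [ENNReal.toReal_add hEfin ENNReal.one_ne_top,
        ENNReal.toReal_add (ENNReal.mul_ne_top ENNReal.ofReal_ne_top (hmom n)) hZ,
        ENNReal.toReal_mul, ENNReal.toReal_ofReal hlam0, ENNReal.toReal_one] at this
      simp only [hC, hM]
      linarith
    -- divide by n and take limits
    have hdiv : ∀ n : ℕ, (pmfEntropy (convPrefix μs n)).toReal / n ≤
        lam * (M n / n) + C / n := by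
      intro n
      rcases Nat.eq_zero_or_pos n with h0 | h1
      · subst h0; simp
      · have hn : (0:ℝ) < n := by exact_mod_cast h1
        calc (pmfEntropy (convPrefix μs n)).toReal / n ≤ (lam * M n + C) / n := by
              gcongr
              exact hHn n
          _ = lam * (M n / n) + C / n := by ring
    have hlim : Tendsto (fun n : ℕ => lam * (M n / n) + C / n) atTop (𝓝 (lam * l + 0)) :=
      (hl.const_mul lam).add (tendsto_const_div_atTop_nhds_zero_nat C)
    have := le_of_tendsto_of_tendsto' hh hlim hdiv
    simpa [hlamdef] using this
  -- let ε → 0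
  by_contra hcon
  push_neg at hcon
  set δ : ℝ := hbar - l * v with hδ
  have hδ0 : 0 < δ := by linarith
  have hpos : (0:ℝ) < 4 * l + 4 := by linarith
  set ε : ℝ := δ / (4 * l + 4) with hε
  have hε0 : 0 < ε := div_pos hδ0 hpos
  have h1 := key ε hε0
  have h2 : 2 * ε * l ≤ δ / 2 := by
    have heq : 2 * ε * l = (2 * δ * l) / (4 * l + 4) := by rw [hε]; ring
    rw [heq, div_le_iff₀ hpos]
    nlinarith
  nlinarith [h1, h2]
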